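/- Typing of stores is invariant under the store theory: if Γ ⊢ s : σ and ⊢ s = t is derivable in the store theory, then Γ ⊢ t : σ. -/

import Mathlib

open Classical

/-- Locations -/
abbrev Loc := ℕ

/-! ### Syntax of λimp (de Bruijn indices) -/

mutual
inductive Val : Type where
  | var : ℕ → Val
  | lam : Comp → Val
inductive Comp : Type where
  | ret  : Val → Comp                     -- unit V
  | bind : Comp → Val → Comp              -- M ⋆ V
  | get  : Loc → Comp → Comp              -- get_ℓ(λ.M)
  | set  : Loc → Val → Comp → Comp        -- set_ℓ(V, M)
end

/-! ### Store and lookup terms -/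

mutual
inductive Store : Type where
  | emp : Store
  | upd : Loc → Lkp → Store → Store       -- set_ℓ(u, s)
inductive Lkp : Type where
  | val : Val → Lkp
  | lkp : Loc → Store → Lkp               -- get_ℓ(s)
end

def Store.dom : Store → Finset Loc
  | .emp => ∅
  | .upd ℓ _ s => insert ℓ s.dom

/-- s ∖ ℓ -/
def Store.erase (ℓ : Loc) : Store → Store
  | .emp => .emp
  | .upd ℓ' u s => if ℓ' = ℓ then s.erase ℓ else .upd ℓ' u (s.erase ℓ)

/-! ### The equational store theory -/

mutual
/-- ⊢ s = t -/
inductive StEq : Store → Store → Prop where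
  | refl (s) : StEq s s
  | symm : StEq s t → StEq t s
  | trans : StEq s t → StEq t r → StEq s r
  | congr : LkEq u u' → StEq s s' → StEq (.upd ℓ u s) (.upd ℓ u' s')
  | setGet (h : ℓ ∈ s.dom) : StEq (.upd ℓ (.lkp ℓ s) s) s
  | overwrite : StEq (.upd ℓ u (.upd ℓ w s)) (.upd ℓ u s)
  | commute (h : ℓ ≠ ℓ') :
      StEq (.upd ℓ u (.upd ℓ' w s)) (.upd ℓ' w (.upd ℓ u s))
/-- ⊢ u = u' -/
inductive LkEq : Lkp → Lkp → Prop where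
  | refl (u) : LkEq u u
  | symm : LkEq u v → LkEq v u
  | trans : LkEq u v → LkEq v w → LkEq u w
  | congr (ℓ) (h : ℓ ∈ s.dom) : StEq s s' → LkEq (.lkp ℓ s) (.lkp ℓ s')
  | getSet : LkEq (.lkp ℓ (.upd ℓ u s)) u
  | getSetNe (h : ℓ ≠ ℓ') : LkEq (.lkp ℓ (.upd ℓ' u s)) (.lkp ℓ s)
end

/-- Extensional equivalence s ≃ t of store terms. -/
def StExtEq (s t : Store) : Prop :=
  s.dom = t.dom ∧ ∀ ℓ ∈ s.dom, LkEq (.lkp ℓ s) (.lkp ℓ t)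

/-! ### Normal forms of stores -/

def Store.size : Store → ℕ
  | .emp => 0
  | .upd _ _ s => s.size + 1

theorem Store.erase_size (ℓ : Loc) : (s : Store) → (s.erase ℓ).size ≤ s.size
  | .emp => le_refl _
  | .upd ℓ' u s => by
      unfold Store.erase
      by_cases h : ℓ' = ℓ
      · simpa [h, Store.size] using le_trans (Store.erase_size ℓ s) (Nat.le_succ _)
      · simpa [h, Store.size] using Nat.succ_le_succ (Store.erase_size ℓ s)

def Store.nf : Store → Store
  | .emp => .emp
  | .upd ℓ u s => .upd ℓ u ((s.erase ℓ).nf)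
termination_by s => s.size
decreasing_by
  simp only [Store.size]
  exact Nat.lt_succ_of_le (Store.erase_size ℓ s)

/-! ### Closedness -/

mutual
def Val.ClosedUnder : ℕ → Val → Prop
  | k, .var n => n < k
  | k, .lam M => Comp.ClosedUnder (k+1) M
def Comp.ClosedUnder : ℕ → Comp → Prop
  | k, .ret V => Val.ClosedUnder k V
  | k, .bind M V => Comp.ClosedUnder k M ∧ Val.ClosedUnder k V
  | k, .get _ M => Comp.ClosedUnder (k+1) M
  | k, .set _ V M => Val.ClosedUnder k V ∧ Comp.ClosedUnder k M
end

mutual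
def Store.Closed : Store → Prop
  | .emp => True
  | .upd _ u s => u.Closed ∧ s.Closed
def Lkp.Closed : Lkp → Prop
  | .val V => Val.ClosedUnder 0 V
  | .lkp _ s => s.Closed
end

/-! ### Substitution -/

mutual
def Val.shiftAux (c : ℕ) : Val → Val
  | .var n => if n < c then .var n else .var (n+1)
  | .lam M => .lam (Comp.shiftAux (c+1) M)
def Comp.shiftAux (c : ℕ) : Comp → Comp
  | .ret V => .ret (V.shiftAux c)
  | .bind M V => .bind (M.shiftAux c) (V.shiftAux c)
  | .get ℓ M => .get ℓ (M.shiftAux (c+1))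
  | .set ℓ V M => .set ℓ (V.shiftAux c) (M.shiftAux c)
end

mutual
/-- capture-avoiding substitution of `W` for the variable `k` in a value -/
def Val.substV (k : ℕ) (W : Val) : Val → Val
  | .var n => if n = k then W else if k < n then .var (n-1) else .var n
  | .lam M => .lam (Comp.substC (k+1) (Val.shiftAux 0 W) M)
/-- capture-avoiding substitution of `W` for the variable `k` in a computation: M[W/k] -/
def Comp.substC (k : ℕ) (W : Val) : Comp → Comp
  | .ret V => .ret (Val.substV k W V)
  | .bind M V => .bind (Comp.substC k W M) (Val.substV k W V)
  | .get ℓ M => .get ℓ (Comp.substC (k+1) (Val.shiftAux 0 W) M)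
  | .set ℓ V M => .set ℓ (Val.substV k W V) (Comp.substC k W M)
end

/-- simultaneous substitution of closed values for the free variables 0,…,n-1 -/
def msubst (Vs : List Val) (M : Comp) : Comp :=
  Vs.foldl (fun acc V => Comp.substC 0 V acc) M

/-! ### Small-step reduction on configurations -/

inductive Red : Comp × Store → Comp × Store → Prop where
  | beta : Red (.bind (.ret V) (.lam M), s) (Comp.substC 0 V M, s)
  | bindl : Red (M, s) (N, t) → Red (.bind M V, s) (.bind N V, t)
  | get : LkEq (.lkp ℓ s) (.val V) → Red (.get ℓ M, s) (Comp.substC 0 V M, s)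
  | set : Red (.set ℓ V M, s) (M, .upd ℓ (.val V) s)

/-- reflexive-transitive closure →* -/
def RedStar : Comp × Store → Comp × Store → Prop := Relation.ReflTransGen Red

/-! ### Big-step convergence -/

inductive BigStep : Comp → Store → Val → Store → Prop where
  | ret : BigStep (.ret V) s V s
  | bind : BigStep M s V s' → BigStep (Comp.substC 0 V N) s' W t →
      BigStep (.bind M (.lam N)) s W t
  | get : LkEq (.lkp ℓ s) (.val V) → BigStep (Comp.substC 0 V M) s W t →
      BigStep (.get ℓ M) s W t
  | set : BigStep M (.upd ℓ (.val V) s) W t → BigStep (.set ℓ V M) s W t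

/-- the partial function M(s): the result (V,t) if (M,s) ⇓ (V,t), and ⊥ (i.e. `none`) otherwise -/
noncomputable def run (M : Comp) (s : Store) : Option (Val × Store) :=
  if h : ∃ p : Val × Store, BigStep M s p.1 p.2 then some h.choose else none

/-! ### Intersection types of the four sorts -/

mutual
/-- value types δ -/
inductive TyD : Type where
  | arrow : TyD → TyT → TyD
  | inter : TyD → TyD → TyD
  | omega : TyD
/-- store types σ -/
inductive TyS : Type where
  | loc : Loc → TyD → TyS
  | inter : TyS → TyS → TyS
  | omega : TyS
/-- result types κ -/
inductive TyC : Type where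
  | prod : TyD → TyS → TyC
  | inter : TyC → TyC → TyC
  | omega : TyC
/-- computation types τ -/
inductive TyT : Type where
  | arrow : TyS → TyC → TyT
  | inter : TyT → TyT → TyT
  | omega : TyT
end

def TyS.domS : TyS → Finset Loc
  | .loc ℓ _ => {ℓ}
  | .inter σ σ' => σ.domS ∪ σ'.domS
  | .omega => ∅

/-! ### Subtyping -/

mutual
inductive SubD : TyD → TyD → Prop where
  | refl (δ) : SubD δ δ
  | trans : SubD δ₁ δ₂ → SubD δ₂ δ₃ → SubD δ₁ δ₃
  | leOmega (δ) : SubD δ .omega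
  | interLeft : SubD (TyD.inter δ δ') δ
  | interRight : SubD (TyD.inter δ δ') δ'
  | interGlb : SubD δ δ₁ → SubD δ δ₂ → SubD δ (TyD.inter δ₁ δ₂)
  | interMono : SubD δ₁ δ₁' → SubD δ₂ δ₂' → SubD (TyD.inter δ₁ δ₂) (TyD.inter δ₁' δ₂')
  | omegaArrow : SubD .omega (.arrow .omega .omega)
  | arrowInter : SubD ((TyD.arrow δ τ).inter (.arrow δ τ')) (TyD.arrow δ (TyT.inter τ τ'))
  | arrowMono : SubD δ' δ → SubT τ τ' → SubD (.arrow δ τ) (.arrow δ' τ')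
inductive SubS : TyS → TyS → Prop where
  | refl (σ) : SubS σ σ
  | trans : SubS σ₁ σ₂ → SubS σ₂ σ₃ → SubS σ₁ σ₃
  | leOmega (σ) : SubS σ .omega
  | interLeft : SubS (TyS.inter σ σ') σ
  | interRight : SubS (TyS.inter σ σ') σ'
  | interGlb : SubS σ σ₁ → SubS σ σ₂ → SubS σ (TyS.inter σ₁ σ₂)
  | interMono : SubS σ₁ σ₁' → SubS σ₂ σ₂' → SubS (TyS.inter σ₁ σ₂) (TyS.inter σ₁' σ₂')
  | locInter : SubS ((TyS.loc ℓ δ).inter (.loc ℓ δ')) (TyS.loc ℓ (TyD.inter δ δ'))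
  | locMono : SubD δ δ' → SubS (.loc ℓ δ) (.loc ℓ δ')
inductive SubC : TyC → TyC → Prop where
  | refl (κ) : SubC κ κ
  | trans : SubC κ₁ κ₂ → SubC κ₂ κ₃ → SubC κ₁ κ₃
  | leOmega (κ) : SubC κ .omega
  | interLeft : SubC (TyC.inter κ κ') κ
  | interRight : SubC (TyC.inter κ κ') κ'
  | interGlb : SubC κ κ₁ → SubC κ κ₂ → SubC κ (TyC.inter κ₁ κ₂)
  | interMono : SubC κ₁ κ₁' → SubC κ₂ κ₂' → SubC (TyC.inter κ₁ κ₂) (TyC.inter κ₁' κ₂')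
  | omegaProd : SubC .omega (.prod .omega .omega)
  | prodInter : SubC ((TyC.prod δ σ).inter (.prod δ' σ')) (TyC.prod (TyD.inter δ δ') (TyS.inter σ σ'))
  | prodMono : SubD δ δ' → SubS σ σ' → SubC (.prod δ σ) (.prod δ' σ')
inductive SubT : TyT → TyT → Prop where
  | refl (τ) : SubT τ τ
  | trans : SubT τ₁ τ₂ → SubT τ₂ τ₃ → SubT τ₁ τ₃
  | leOmega (τ) : SubT τ .omega
  | interLeft : SubT (TyT.inter τ τ') τ
  | interRight : SubT (TyT.inter τ τ') τ'
  | interGlb : SubT τ τ₁ → SubT τ τ₂ → SubT τ (TyT.inter τ₁ τ₂)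
  | interMono : SubT τ₁ τ₁' → SubT τ₂ τ₂' → SubT (TyT.inter τ₁ τ₂) (TyT.inter τ₁' τ₂')
  | omegaArrow : SubT .omega (.arrow .omega .omega)
  | arrowInter : SubT ((TyT.arrow σ κ).inter (.arrow σ κ')) (TyT.arrow σ (TyC.inter κ κ'))
  | arrowMono : SubS σ' σ → SubC κ κ' → SubT (.arrow σ κ) (.arrow σ' κ')
end

/-! ### Finite intersections -/

def InterD (l : List TyD) : TyD := l.foldr TyD.inter TyD.omega
def InterS (l : List TyS) : TyS := l.foldr TyS.inter TyS.omega
def InterC (l : List TyC) : TyC := l.foldr TyC.inter TyC.omega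
def InterT (l : List TyT) : TyT := l.foldr TyT.inter TyT.omega

/-! ### Type assignment -/

/-- typing contexts (de Bruijn) -/
abbrev Ctx := List TyD

mutual
inductive TypV : Ctx → Val → TyD → Prop where
  | var : Γ[n]? = some δ → TypV Γ (.var n) δ
  | lam : TypC (δ :: Γ) M τ → TypV Γ (.lam M) (.arrow δ τ)
  | omega : TypV Γ V .omega
  | inter : TypV Γ V δ → TypV Γ V δ' → TypV Γ V (TyD.inter δ δ')
  | sub : TypV Γ V δ → SubD δ δ' → TypV Γ V δ'
inductive TypC : Ctx → Comp → TyT → Prop where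
  | ret : TypV Γ V δ → TypC Γ (.ret V) (.arrow σ (.prod δ σ))
  | bind : TypC Γ M (.arrow σ (.prod δ' σ')) →
      TypV Γ V (.arrow δ' (.arrow σ' (.prod δ'' σ''))) →
      TypC Γ (.bind M V) (.arrow σ (.prod δ'' σ''))
  | get : TypC (δ :: Γ) M (.arrow σ κ) →
      TypC Γ (.get ℓ M) (.arrow ((TyS.loc ℓ δ).inter σ) κ)
  | set : TypV Γ V δ → TypC Γ M (.arrow ((TyS.loc ℓ δ).inter σ) κ) →
      ℓ ∉ σ.domS → TypC Γ (.set ℓ V M) (.arrow σ κ)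
  | omega : TypC Γ M .omega
  | inter : TypC Γ M τ → TypC Γ M τ' → TypC Γ M (TyT.inter τ τ')
  | sub : TypC Γ M τ → SubT τ τ' → TypC Γ M τ'
end

mutual
inductive TypS : Ctx → Store → TyS → Prop where
  | updA : TypL Γ u δ → TypS Γ (.upd ℓ u s) (.loc ℓ δ)
  | updB : TypS Γ s (.loc ℓ' δ) → ℓ ≠ ℓ' → TypS Γ (.upd ℓ u s) (.loc ℓ' δ)
  | omega : TypS Γ s .omega
  | inter : TypS Γ s σ → TypS Γ s σ' → TypS Γ s (TyS.inter σ σ')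
  | sub : TypS Γ s σ → SubS σ σ' → TypS Γ s σ'
inductive TypL : Ctx → Lkp → TyD → Prop where
  | val : TypV Γ V δ → TypL Γ (.val V) δ
  | lkp : TypS Γ s (.loc ℓ δ) → TypL Γ (.lkp ℓ s) δ
  | omega : TypL Γ u .omega
  | inter : TypL Γ u δ → TypL Γ u δ' → TypL Γ u (TyD.inter δ δ')
  | sub : TypL Γ u δ → SubD δ δ' → TypL Γ u δ'
end

inductive TypConf : Ctx → Comp → Store → TyC → Prop where
  | conf : TypC Γ M (.arrow σ κ) → TypS Γ s σ → TypConf Γ M s κ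
  | omega : TypConf Γ M s .omega
  | inter : TypConf Γ M s κ → TypConf Γ M s κ' → TypConf Γ M s (TyC.inter κ κ')
  | sub : TypConf Γ M s κ → SubC κ κ' → TypConf Γ M s κ'

/-! ### Saturated sets -/

mutual
def SatD : TyD → Set Val
  | .omega => {V | Val.ClosedUnder 0 V}
  | .arrow δ τ =>
      {V | Val.ClosedUnder 0 V ∧ ∀ W ∈ SatD δ, Comp.bind (.ret W) V ∈ SatT τ}
  | .inter δ δ' => SatD δ ∩ SatD δ'
def SatS : TyS → Set Store
  | .omega => {s | s.Closed}
  | .loc ℓ δ =>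
      {s | s.Closed ∧ ℓ ∈ s.dom ∧ ∃ V ∈ SatD δ, LkEq (.lkp ℓ s) (.val V)}
  | .inter σ σ' => SatS σ ∩ SatS σ'
def SatC : TyC → Set (Option (Val × Store))
  | .omega => {r | ∀ V t, r = some (V, t) → Val.ClosedUnder 0 V ∧ Store.Closed t}
  | .prod δ σ => {r | ∃ V t, r = some (V, t) ∧ V ∈ SatD δ ∧ t ∈ SatS σ}
  | .inter κ κ' => SatC κ ∩ SatC κ'
def SatT : TyT → Set Comp
  | .omega => {M | Comp.ClosedUnder 0 M}
  | .arrow σ κ => {M | Comp.ClosedUnder 0 M ∧ ∀ s ∈ SatS σ, run M s ∈ SatC κ}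
  | .inter τ τ' => SatT τ ∩ SatT τ'
end
/-! ### Auxiliary machinery for statement 16 -/

def semS (σ : TyS) (ℓ : Loc) : TyD :=
  match σ with
  | .loc ℓ' δ => if ℓ' = ℓ then δ else .omega
  | .inter σ σ' => .inter (semS σ ℓ) (semS σ' ℓ)
  | .omega => .omega

set_option maxHeartbeats 1000000 in
theorem subS_sem {σ σ' : TyS} (h : SubS σ σ') :
    SubS σ σ' ∧ σ'.domS ⊆ σ.domS ∧ ∀ ℓ, SubD (semS σ ℓ) (semS σ' ℓ) := by
  refine SubS.rec
    (motive_1 := fun δ δ' _ => SubD δ δ')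
    (motive_2 := fun σ σ' _ => SubS σ σ' ∧ σ'.domS ⊆ σ.domS ∧ ∀ ℓ, SubD (semS σ ℓ) (semS σ' ℓ))
    (motive_3 := fun κ κ' _ => SubC κ κ')
    (motive_4 := fun τ τ' _ => SubT τ τ')
    ?_ ?_ ?_ ?_ ?_ ?_ ?_ ?_ ?_ ?_
    ?s1 ?s2 ?s3 ?s4 ?s5 ?s6 ?s7 ?s8 ?s9
    ?_ ?_ ?_ ?_ ?_ ?_ ?_ ?_ ?_ ?_
    ?_ ?_ ?_ ?_ ?_ ?_ ?_ ?_ ?_ ?_ h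
  case s1 =>
    exact fun σ => ⟨SubS.refl σ, subset_rfl, fun ℓ => SubD.refl _⟩
  case s2 =>
    intro σ₁ σ₂ σ₃ a b ih ih'
    exact ⟨ih.1.trans ih'.1, fun x hx => ih.2.1 (ih'.2.1 hx),
      fun ℓ => (ih.2.2 ℓ).trans (ih'.2.2 ℓ)⟩
  case s3 =>
    exact fun σ => ⟨SubS.leOmega σ, by simp [TyS.domS], fun ℓ => SubD.leOmega _⟩
  case s4 =>
    intro σ σ'
    exact ⟨SubS.interLeft, by simp [TyS.domS], fun ℓ => SubD.interLeft⟩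
  case s5 =>
    intro σ σ'
    exact ⟨SubS.interRight, by simp [TyS.domS], fun ℓ => SubD.interRight⟩
  case s6 =>
    intro σ σ₁ σ₂ a b ih ih'
    exact ⟨SubS.interGlb ih.1 ih'.1, by
      simp only [TyS.domS]; exact Finset.union_subset ih.2.1 ih'.2.1,
      fun ℓ => SubD.interGlb (ih.2.2 ℓ) (ih'.2.2 ℓ)⟩
  case s7 =>
    intro σ₁ σ₁' σ₂ σ₂' a b ih ih'
    exact ⟨SubS.interMono ih.1 ih'.1, by
      simp only [TyS.domS]; exact Finset.union_subset_union ih.2.1 ih'.2.1,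
      fun ℓ => SubD.interMono (ih.2.2 ℓ) (ih'.2.2 ℓ)⟩
  case s8 =>
    intro ℓ δ δ'
    refine ⟨SubS.locInter, by simp [TyS.domS], fun ℓ' => ?_⟩
    by_cases h : ℓ = ℓ'
    · simp only [semS, if_pos h]; exact SubD.refl _
    · simp only [semS, if_neg h]; exact SubD.leOmega _
  case s9 =>
    intro δ δ' ℓ a ih
    refine ⟨SubS.locMono ih, by simp [TyS.domS], fun ℓ' => ?_⟩
    by_cases h : ℓ = ℓ'
    · simp only [semS, if_pos h]; exact ih
    · simp only [semS, if_neg h]; exact SubD.refl _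
  all_goals intros
  all_goals solve_by_elim
    [And.left, SubD.refl, SubD.trans, SubD.leOmega, SubD.interLeft, SubD.interRight,
     SubD.interGlb, SubD.interMono, SubD.omegaArrow, SubD.arrowInter, SubD.arrowMono,
     SubC.refl, SubC.trans, SubC.leOmega, SubC.interLeft, SubC.interRight,
     SubC.interGlb, SubC.interMono, SubC.omegaProd, SubC.prodInter, SubC.prodMono,
     SubT.refl, SubT.trans, SubT.leOmega, SubT.interLeft, SubT.interRight,
     SubT.interGlb, SubT.interMono, SubT.omegaArrow, SubT.arrowInter, SubT.arrowMono]
theorem omega_sem : ∀ (σ : TyS) (ℓ : Loc), ℓ ∉ σ.domS → SubD .omega (semS σ ℓ)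
  | .loc ℓ' δ, ℓ, h => by
      simp only [TyS.domS, Finset.mem_singleton] at h
      simp only [semS, if_neg (fun e : ℓ' = ℓ => h e.symm)]
      exact SubD.refl _
  | .inter σ σ', ℓ, h => by
      simp only [TyS.domS, Finset.mem_union, not_or] at h
      exact SubD.interGlb (omega_sem σ ℓ h.1) (omega_sem σ' ℓ h.2)
  | .omega, ℓ, h => SubD.refl _

theorem le_atom : ∀ (σ : TyS) (ℓ : Loc), ℓ ∈ σ.domS → SubS σ (.loc ℓ (semS σ ℓ))
  | .loc ℓ' δ, ℓ, h => by
      simp only [TyS.domS, Finset.mem_singleton] at h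
      cases h
      simp only [semS, if_pos rfl]
      exact SubS.refl _
  | .inter σ σ', ℓ, h => by
      by_cases h1 : ℓ ∈ σ.domS <;> by_cases h2 : ℓ ∈ σ'.domS
      · exact (SubS.interMono (le_atom σ ℓ h1) (le_atom σ' ℓ h2)).trans SubS.locInter
      · exact (SubS.interLeft.trans (le_atom σ ℓ h1)).trans
          (SubS.locMono (SubD.interGlb (SubD.refl _)
            ((SubD.leOmega _).trans (omega_sem σ' ℓ h2))))
      · exact (SubS.interRight.trans (le_atom σ' ℓ h2)).trans
          (SubS.locMono (SubD.interGlb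
            ((SubD.leOmega _).trans (omega_sem σ ℓ h1)) (SubD.refl _)))
      · simp only [TyS.domS, Finset.mem_union] at h
        exact absurd h (by simp [h1, h2])
  | .omega, ℓ, h => by simp [TyS.domS] at h

theorem atoms_typS : ∀ (σ : TyS) {Γ : Ctx} {s : Store},
    (∀ ℓ ∈ σ.domS, TypS Γ s (.loc ℓ (semS σ ℓ))) → TypS Γ s σ
  | .loc ℓ δ, Γ, s, h => by
      have := h ℓ (by simp [TyS.domS])
      simpa only [semS, if_pos rfl, if_true] using this
  | .inter σ σ', Γ, s, h =>
      TypS.inter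
        (atoms_typS σ (fun ℓ hl => (h ℓ (by simp [TyS.domS, hl])).sub
          (SubS.locMono SubD.interLeft)))
        (atoms_typS σ' (fun ℓ hl => (h ℓ (by simp [TyS.domS, hl])).sub
          (SubS.locMono SubD.interRight)))
  | .omega, Γ, s, _ => TypS.omega

theorem updInv {Γ : Ctx} {s : Store} {σ : TyS} (h : TypS Γ s σ) :
    ∀ ℓ u s₀, s = .upd ℓ u s₀ →
      TypL Γ u (semS σ ℓ) ∧ ∀ ℓ' ∈ σ.domS, ℓ' ≠ ℓ → TypS Γ s₀ (.loc ℓ' (semS σ ℓ')) := by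
  refine (TypS.rec
    (motive_1 := fun s σ _ => TypS Γ s σ ∧ ∀ ℓ u s₀, s = .upd ℓ u s₀ →
      TypL Γ u (semS σ ℓ) ∧ ∀ ℓ' ∈ σ.domS, ℓ' ≠ ℓ → TypS Γ s₀ (.loc ℓ' (semS σ ℓ')))
    (motive_2 := fun u δ _ => TypL Γ u δ)
    ?_ ?_ ?_ ?_ ?_ ?_ ?_ ?_ ?_ ?_ h).2
  -- updA
  · intro u δ ℓ s a ih
    refine ⟨TypS.updA ih, ?_⟩
    rintro ℓ₀ u₀ s₀ ⟨rfl, rfl, rfl⟩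
    refine ⟨by simpa only [semS, if_pos rfl, if_true] using ih, ?_⟩
    intro ℓ' h' hne
    simp only [TyS.domS, Finset.mem_singleton] at h'
    exact absurd h' hne
  -- updB
  · intro s ℓ' δ ℓ u a hne ih
    refine ⟨TypS.updB ih.1 hne, ?_⟩
    rintro ℓ₀ u₀ s₀ ⟨rfl, rfl, rfl⟩
    constructor
    · simp only [semS, if_neg (fun e : ℓ' = ℓ => hne e.symm)]
      exact TypL.omega
    · intro ℓ'' h'' _
      simp only [TyS.domS, Finset.mem_singleton] at h''
      cases h''
      simpa only [semS, if_pos rfl, if_true] using ih.1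
  -- omega
  · intro s
    exact ⟨TypS.omega, fun ℓ u s₀ _ => ⟨TypL.omega, fun ℓ' h' _ => by
      simp [TyS.domS] at h'⟩⟩
  -- inter
  · intro s σ σ' a a' ih ih'
    refine ⟨TypS.inter ih.1 ih'.1, ?_⟩
    rintro ℓ u s₀ rfl
    refine ⟨TypL.inter (ih.2 ℓ u s₀ rfl).1 (ih'.2 ℓ u s₀ rfl).1, ?_⟩
    intro ℓ' hmem hne
    by_cases h1 : ℓ' ∈ σ.domS <;> by_cases h2 : ℓ' ∈ σ'.domS
    · exact (TypS.inter ((ih.2 ℓ u s₀ rfl).2 ℓ' h1 hne)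
        ((ih'.2 ℓ u s₀ rfl).2 ℓ' h2 hne)).sub SubS.locInter
    · exact ((ih.2 ℓ u s₀ rfl).2 ℓ' h1 hne).sub
        (SubS.locMono (SubD.interGlb (SubD.refl _)
          ((SubD.leOmega _).trans (omega_sem σ' ℓ' h2))))
    · exact ((ih'.2 ℓ u s₀ rfl).2 ℓ' h2 hne).sub
        (SubS.locMono (SubD.interGlb
          ((SubD.leOmega _).trans (omega_sem σ ℓ' h1)) (SubD.refl _)))
    · simp only [TyS.domS, Finset.mem_union] at hmem
      exact absurd hmem (by simp [h1, h2])
  -- sub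
  · intro s σ σ' a hsub ih
    refine ⟨ih.1.sub hsub, ?_⟩
    rintro ℓ u s₀ rfl
    refine ⟨(ih.2 ℓ u s₀ rfl).1.sub ((subS_sem hsub).2.2 ℓ), ?_⟩
    intro ℓ' hmem hne
    exact ((ih.2 ℓ u s₀ rfl).2 ℓ' ((subS_sem hsub).2.1 hmem) hne).sub
      (SubS.locMono ((subS_sem hsub).2.2 ℓ'))
  -- TypL.val
  · exact fun a => TypL.val a
  -- TypL.lkp
  · exact fun a ih => TypL.lkp ih.1
  -- TypL.omega
  · exact fun {u} => TypL.omega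
  -- TypL.inter
  · exact fun a a' ih ih' => TypL.inter ih ih'
  -- TypL.sub
  · exact fun a hsub ih => ih.sub hsub

theorem updInvEq {Γ : Ctx} {ℓ : Loc} {u : Lkp} {s : Store} {δ : TyD}
    (h : TypS Γ (.upd ℓ u s) (.loc ℓ δ)) : TypL Γ u δ := by
  have := (updInv h ℓ u s rfl).1
  simpa only [semS, if_pos rfl, if_true] using this

theorem updInvNe {Γ : Ctx} {ℓ ℓ' : Loc} {u : Lkp} {s : Store} {δ : TyD}
    (h : TypS Γ (.upd ℓ u s) (.loc ℓ' δ)) (hne : ℓ' ≠ ℓ) : TypS Γ s (.loc ℓ' δ) := by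
  have := (updInv h ℓ u s rfl).2 ℓ' (by simp [TyS.domS]) hne
  simpa only [semS, if_pos rfl, if_true] using this

theorem dom_loc_omega : ∀ (s : Store) {Γ : Ctx} {ℓ : Loc}, ℓ ∈ s.dom →
    TypS Γ s (.loc ℓ .omega)
  | .emp, Γ, ℓ, h => by simp [Store.dom] at h
  | .upd ℓ' u s, Γ, ℓ, h => by
      by_cases e : ℓ = ℓ'
      · cases e; exact TypS.updA TypL.omega
      · simp only [Store.dom, Finset.mem_insert] at h
        exact TypS.updB (dom_loc_omega s (h.resolve_left e)) (fun e' => e e'.symm)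
theorem lkpLemmas {Γ : Ctx} {v : Lkp} {δ : TyD} (h : TypL Γ v δ) :
    (∀ ℓ s s', v = .lkp ℓ s →
        (∀ δ', TypS Γ s (.loc ℓ δ') → TypS Γ s' (.loc ℓ δ')) → TypL Γ (.lkp ℓ s') δ)
  ∧ (∀ ℓ u s, v = .lkp ℓ (.upd ℓ u s) → TypL Γ u δ)
  ∧ (∀ ℓ s, v = .lkp ℓ s → ℓ ∈ s.dom → TypS Γ s (.loc ℓ δ)) := by
  refine (TypL.rec
    (motive_1 := fun s σ _ => TypS Γ s σ)
    (motive_2 := fun v δ _ => TypL Γ v δ ∧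
      (∀ ℓ s s', v = .lkp ℓ s →
          (∀ δ', TypS Γ s (.loc ℓ δ') → TypS Γ s' (.loc ℓ δ')) → TypL Γ (.lkp ℓ s') δ)
      ∧ (∀ ℓ u s, v = .lkp ℓ (.upd ℓ u s) → TypL Γ u δ)
      ∧ (∀ ℓ s, v = .lkp ℓ s → ℓ ∈ s.dom → TypS Γ s (.loc ℓ δ)))
    ?_ ?_ ?_ ?_ ?_ ?_ ?_ ?_ ?_ ?_ h).2
  · exact fun a ih => TypS.updA ih.1
  · exact fun a hne ih => TypS.updB ih hne
  · exact fun {s} => TypS.omega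
  · exact fun a a' ih ih' => TypS.inter ih ih'
  · exact fun a hsub ih => ih.sub hsub
  -- val
  · intro V δ a
    exact ⟨TypL.val a,
      fun ℓ s s' he _ => Lkp.noConfusion he,
      fun ℓ u s he => Lkp.noConfusion he,
      fun ℓ s he _ => Lkp.noConfusion he⟩
  -- lkp
  · intro s ℓ δ a ih
    refine ⟨TypL.lkp ih, ?_, ?_, ?_⟩
    · intro ℓ₀ s₀ s' he htr
      injection he with h1 h2
      subst h1; subst h2
      exact TypL.lkp (htr δ ih)
    · intro ℓ₀ u s₀ he
      injection he with h1 h2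
      subst h1; subst h2
      exact updInvEq ih
    · intro ℓ₀ s₀ he _
      injection he with h1 h2
      subst h1; subst h2
      exact ih
  -- omega
  · intro u
    exact ⟨TypL.omega,
      fun ℓ s s' _ _ => TypL.omega,
      fun ℓ u' s _ => TypL.omega,
      fun ℓ s _ hdom => dom_loc_omega s hdom⟩
  -- inter
  · intro u δ δ' a a' ih ih'
    exact ⟨TypL.inter ih.1 ih'.1,
      fun ℓ s s' he htr => TypL.inter (ih.2.1 ℓ s s' he htr) (ih'.2.1 ℓ s s' he htr),
      fun ℓ u' s he => TypL.inter (ih.2.2.1 ℓ u' s he) (ih'.2.2.1 ℓ u' s he),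
      fun ℓ s he hdom => (TypS.inter (ih.2.2.2 ℓ s he hdom) (ih'.2.2.2 ℓ s he hdom)).sub
        SubS.locInter⟩
  -- sub
  · intro u δ δ' a hsub ih
    exact ⟨ih.1.sub hsub,
      fun ℓ s s' he htr => (ih.2.1 ℓ s s' he htr).sub hsub,
      fun ℓ u' s he => (ih.2.2.1 ℓ u' s he).sub hsub,
      fun ℓ s he hdom => (ih.2.2.2 ℓ s he hdom).sub (SubS.locMono hsub)⟩

theorem commuteAux {Γ : Ctx} {ℓ ℓ' : Loc} {u w : Lkp} {s : Store} {ℓ₀ : Loc} {δ : TyD}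
    (hne : ℓ ≠ ℓ') (h : TypS Γ (.upd ℓ u (.upd ℓ' w s)) (.loc ℓ₀ δ)) :
    TypS Γ (.upd ℓ' w (.upd ℓ u s)) (.loc ℓ₀ δ) := by
  by_cases e1 : ℓ₀ = ℓ
  · cases e1
    exact TypS.updB (TypS.updA (updInvEq h)) (Ne.symm hne)
  · by_cases e2 : ℓ₀ = ℓ'
    · cases e2
      exact TypS.updA (updInvEq (updInvNe h e1))
    · exact TypS.updB (TypS.updB (updInvNe (updInvNe h e1) e2)
        (fun e => e1 e.symm)) (fun e => e2 e.symm)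

theorem stEq_atoms {s t : Store} (he : StEq s t) :
    ∀ (Γ : Ctx) (ℓ : Loc) (δ : TyD), TypS Γ s (.loc ℓ δ) ↔ TypS Γ t (.loc ℓ δ) := by
  refine StEq.rec
    (motive_1 := fun s t _ => ∀ Γ ℓ δ, TypS Γ s (.loc ℓ δ) ↔ TypS Γ t (.loc ℓ δ))
    (motive_2 := fun u v _ => ∀ Γ δ, TypL Γ u δ ↔ TypL Γ v δ)
    ?_ ?_ ?_ ?_ ?_ ?_ ?_ ?_ ?_ ?_ ?_ ?_ ?_ he
  · exact fun s Γ ℓ δ => Iff.rfl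
  · exact fun a ih Γ ℓ δ => (ih Γ ℓ δ).symm
  · exact fun a a' ih ih' Γ ℓ δ => (ih Γ ℓ δ).trans (ih' Γ ℓ δ)
  -- congr
  · intro u u' s s' ℓ a a' ihL ihS Γ ℓ₀ δ
    constructor
    · intro h
      by_cases e : ℓ₀ = ℓ
      · cases e; exact TypS.updA ((ihL Γ δ).mp (updInvEq h))
      · exact TypS.updB ((ihS Γ ℓ₀ δ).mp (updInvNe h e)) (fun e' => e e'.symm)
    · intro h
      by_cases e : ℓ₀ = ℓ
      · cases e; exact TypS.updA ((ihL Γ δ).mpr (updInvEq h))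
      · exact TypS.updB ((ihS Γ ℓ₀ δ).mpr (updInvNe h e)) (fun e' => e e'.symm)
  -- setGet
  · intro ℓ s hdom Γ ℓ₀ δ
    constructor
    · intro h
      by_cases e : ℓ₀ = ℓ
      · cases e; exact (lkpLemmas (updInvEq h)).2.2 _ s rfl hdom
      · exact updInvNe h e
    · intro h
      by_cases e : ℓ₀ = ℓ
      · cases e; exact TypS.updA (TypL.lkp h)
      · exact TypS.updB h (fun e' => e e'.symm)
  -- overwrite
  · intro ℓ u w s Γ ℓ₀ δ
    constructor
    · intro h
      by_cases e : ℓ₀ = ℓ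
      · cases e; exact TypS.updA (updInvEq h)
      · exact TypS.updB (updInvNe (updInvNe h e) e) (fun e' => e e'.symm)
    · intro h
      by_cases e : ℓ₀ = ℓ
      · cases e; exact TypS.updA (updInvEq h)
      · exact TypS.updB (TypS.updB (updInvNe h e) (fun e' => e e'.symm))
          (fun e' => e e'.symm)
  -- commute
  · intro ℓ ℓ' u w s hne Γ ℓ₀ δ
    exact ⟨commuteAux hne, commuteAux (Ne.symm hne)⟩
  · exact fun u Γ δ => Iff.rfl
  · exact fun a ih Γ δ => (ih Γ δ).symm
  · exact fun a a' ih ih' Γ δ => (ih Γ δ).trans (ih' Γ δ)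
  -- LkEq.congr
  · intro s s' ℓ hdom a ih Γ δ
    exact ⟨fun h' => (lkpLemmas h').1 ℓ s s' rfl (fun δ' ht => (ih Γ ℓ δ').mp ht),
      fun h' => (lkpLemmas h').1 ℓ s' s rfl (fun δ' ht => (ih Γ ℓ δ').mpr ht)⟩
  -- getSet
  · intro ℓ u s Γ δ
    exact ⟨fun h' => (lkpLemmas h').2.1 ℓ u s rfl,
      fun h' => TypL.lkp (TypS.updA h')⟩
  -- getSetNe
  · intro ℓ ℓ' u s hne Γ δ
    exact ⟨fun h' => (lkpLemmas h').1 ℓ (.upd ℓ' u s) s rfl (fun δ' ht => updInvNe ht hne),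
      fun h' => (lkpLemmas h').1 ℓ s (.upd ℓ' u s) rfl
        (fun δ' ht => TypS.updB ht (Ne.symm hne))⟩
/-- typing of stores is invariant under the store theory. -/
theorem store_typing_invariant {Γ : Ctx} {s t : Store} {σ : TyS}
    (h : TypS Γ s σ) (he : StEq s t) : TypS Γ t σ := by
  refine atoms_typS σ (fun ℓ hl => ?_)
  exact (stEq_atoms he Γ ℓ (semS σ ℓ)).mp (h.sub (le_atom σ ℓ hl))
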